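/- There is an absolute constant c₀ > 0 with the following property. Let φ : ℝ → ℝ be a measurable odd function with 0 ≤ φ(x) ≤ 1 for x > 0, φ(x) = 1 for 0 < x ≤ 1, and φ(x) = 0 for x ≥ 2. Then for every z ∈ ℍ with 0 < |z| ≤ 1/2: |G_φ(z)| ≥ (2/π)·log(1/|z|) − c₀, where G_φ(z) = (1/(πi))∫_ℝ φ(t)/(z − t) dt. In particular, there is a fixed δ with 0 < δ ≤ 1/2 such that |G_φ(z)| ≥ (1/π)·log(1/|z|) for all z ∈ ℍ with 0 < |z| ≤ δ. -/

import Mathlib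

open MeasureTheory Real Complex Filter
open scoped Topology

noncomputable section

/-- `G_ψ(z) = (1/(πi)) ∫_ℝ ψ(t)/(z - t) dt`, the analytic extension `ψ + iHψ`
of an integrable `ψ : ℝ → ℝ` to the upper half-plane. -/
noncomputable def UHG (ψ : ℝ → ℝ) (z : ℂ) : ℂ :=
  ((Real.pi : ℂ) * Complex.I)⁻¹ • ∫ t : ℝ, ((ψ t : ℂ) / (z - (t : ℂ)))

/-- The hypotheses on the bump function `φ`: measurable, odd, `0 ≤ φ ≤ 1` on `(0,∞)`,
`φ = 1` on `(0,1]` and `φ = 0` on `[2,∞)`. -/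
def IsPhi (φ : ℝ → ℝ) : Prop :=
  Measurable φ ∧ (∀ x : ℝ, φ (-x) = - φ x) ∧ (∀ x : ℝ, 0 < x → 0 ≤ φ x ∧ φ x ≤ 1) ∧
    (∀ x : ℝ, 0 < x → x ≤ 1 → φ x = 1) ∧ (∀ x : ℝ, 2 ≤ x → φ x = 0)

namespace StmtAux

lemma phi_zero {φ : ℝ → ℝ} (h : IsPhi φ) : φ 0 = 0 := by
  have := h.2.1 0
  simp only [neg_zero] at this
  linarith

lemma phi_abs_le {φ : ℝ → ℝ} (h : IsPhi φ) (t : ℝ) : |φ t| ≤ 1 := by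
  obtain ⟨_, hodd, hb, _, _⟩ := h
  rcases lt_trichotomy t 0 with ht | rfl | ht
  · have h1 := hb (-t) (by linarith)
    have h2 : φ t = - φ (-t) := by
      have := hodd (-t)
      rw [neg_neg] at this
      linarith
    rw [h2, abs_neg, abs_le]
    exact ⟨by linarith [h1.2], h1.2⟩
  · have h0 : φ 0 = 0 := by have := hodd 0; simp only [neg_zero] at this; linarith
    simp [h0]
  · have h1 := hb t ht
    rw [abs_le]
    exact ⟨by linarith [h1.1], h1.2⟩

lemma phi_zero_far {φ : ℝ → ℝ} (h : IsPhi φ) (t : ℝ) (ht : 2 ≤ |t|) : φ t = 0 := by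
  rcases le_or_gt 0 t with h0 | h0
  · exact h.2.2.2.2 t (by rwa [_root_.abs_of_nonneg h0] at ht)
  · have : φ (-t) = 0 := h.2.2.2.2 (-t) (by rw [abs_of_neg h0] at ht; linarith)
    have h2 := h.2.1 t
    rw [this] at h2
    linarith

lemma denom_ne_zero {z : ℂ} (hz : 0 < z.im) (t : ℝ) : z - (t : ℂ) ≠ 0 := by
  intro h
  have : (z - (t : ℂ)).im = 0 := by rw [h]; simp
  simp only [Complex.sub_im, Complex.ofReal_im, sub_zero] at this
  linarith

lemma norm_denom_ge {z : ℂ} (hz : 0 < z.im) (t : ℝ) : z.im ≤ ‖z - (t : ℂ)‖ := by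
  have h1 : |(z - (t : ℂ)).im| ≤ ‖z - (t : ℂ)‖ := Complex.abs_im_le_norm _
  simp only [Complex.sub_im, Complex.ofReal_im, sub_zero] at h1
  calc z.im ≤ |z.im| := le_abs_self _
    _ ≤ _ := h1

lemma f_meas {φ : ℝ → ℝ} (h : IsPhi φ) (z : ℂ) :
    Measurable (fun t : ℝ => (φ t : ℂ) / (z - (t : ℂ))) := by
  apply Measurable.div
  · exact Complex.measurable_ofReal.comp h.1
  · exact (measurable_const.sub Complex.measurable_ofReal)

lemma f_integrable {φ : ℝ → ℝ} (h : IsPhi φ) {z : ℂ} (hz : 0 < z.im) :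
    Integrable (fun t : ℝ => (φ t : ℂ) / (z - (t : ℂ))) := by
  set f : ℝ → ℂ := fun t => (φ t : ℂ) / (z - (t : ℂ)) with hf
  have hsupp : ∀ t : ℝ, t ∉ Set.Icc (-2 : ℝ) 2 → f t = 0 := by
    intro t ht
    have : 2 ≤ |t| := by
      rw [Set.mem_Icc] at ht
      rw [le_abs]
      by_contra hc
      push_neg at hc
      exact ht ⟨by linarith [hc.2], hc.1.le⟩
    simp [hf, phi_zero_far h t this]
  have heq : f = Set.indicator (Set.Icc (-2 : ℝ) 2) f := by
    funext t
    by_cases ht : t ∈ Set.Icc (-2 : ℝ) 2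
    · rw [Set.indicator_of_mem ht]
    · rw [Set.indicator_of_notMem ht, hsupp t ht]
  rw [heq, integrable_indicator_iff measurableSet_Icc]
  apply Measure.integrableOn_of_bounded (M := 1 / z.im)
  · rw [Real.volume_Icc]
    exact ENNReal.ofReal_ne_top
  · exact (f_meas h z).aestronglyMeasurable
  · filter_upwards with t
    have h1 : ‖(φ t : ℂ)‖ ≤ 1 := by
      rw [Complex.norm_real, Real.norm_eq_abs]
      exact phi_abs_le h t
    have h2 : z.im ≤ ‖z - (t : ℂ)‖ := norm_denom_ge hz t
    simp only [hf, norm_div]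
    exact div_le_div₀ (by norm_num) h1 hz h2


lemma hasDeriv_neg_log {z : ℂ} (hz : 0 < z.im) (t : ℝ) :
    HasDerivAt (fun s : ℝ => -Complex.log (z - (s : ℂ))) ((z - (t : ℂ))⁻¹) t := by
  have hmem : z - (t : ℂ) ∈ Complex.slitPlane := by
    rw [Complex.mem_slitPlane_iff]
    right
    simp only [Complex.sub_im, Complex.ofReal_im, sub_zero]
    exact hz.ne'
  have h1 : HasDerivAt (fun w : ℂ => z - w) (-1) (t : ℂ) := (hasDerivAt_id _).const_sub z
  have h2 := ((Complex.hasDerivAt_log hmem).comp (t : ℂ) h1).neg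
  have h4 := h2.comp_ofReal
  have he : (z - (t : ℂ))⁻¹ = -((z - (t : ℂ))⁻¹ * -1) := by ring
  rw [he]
  exact h4

lemma inv_intervalIntegrable {z : ℂ} (hz : 0 < z.im) (a b : ℝ) :
    IntervalIntegrable (fun t : ℝ => (z - (t : ℂ))⁻¹) volume a b :=
  ((continuous_const.sub Complex.continuous_ofReal).inv₀
    (fun t => denom_ne_zero hz t)).intervalIntegrable a b

lemma integral_inv {z : ℂ} (hz : 0 < z.im) (a b : ℝ) :
    ∫ t in a..b, (z - (t : ℂ))⁻¹ = Complex.log (z - a) - Complex.log (z - b) := by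
  have := intervalIntegral.integral_eq_sub_of_hasDerivAt
    (f := fun s : ℝ => -Complex.log (z - (s : ℂ)))
    (fun t _ => hasDeriv_neg_log hz t) (inv_intervalIntegrable hz a b)
  rw [this]
  show -Complex.log (z - b) - -Complex.log (z - a) = _
  ring

lemma mid_eq {φ : ℝ → ℝ} (h : IsPhi φ) {z : ℂ} (hz : 0 < z.im) :
    ∫ t in Set.Ioc (-1:ℝ) 1, (φ t : ℂ) / (z - (t : ℂ)) =
      2 * Complex.log z - Complex.log (z - 1) - Complex.log (z + 1) := by
  have hset : ∫ t in Set.Ioc (-1:ℝ) 1, (φ t : ℂ) / (z - (t : ℂ)) =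
      ∫ t in (-1:ℝ)..1, (φ t : ℂ) / (z - (t : ℂ)) :=
    (intervalIntegral.integral_of_le (by norm_num)).symm
  have hii : ∀ a b : ℝ, IntervalIntegrable (fun t : ℝ => (φ t : ℂ) / (z - (t : ℂ))) volume a b :=
    fun a b => (f_integrable h hz).intervalIntegrable
  have hsplit := intervalIntegral.integral_add_adjacent_intervals
    (f := fun t : ℝ => (φ t : ℂ) / (z - (t : ℂ))) (μ := volume)
    (a := -1) (b := 0) (c := 1) (hii _ _) (hii _ _)
  have e1 : ∫ t in (0:ℝ)..1, (φ t : ℂ) / (z - (t : ℂ)) = ∫ t in (0:ℝ)..1, (z - (t : ℂ))⁻¹ := by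
    apply intervalIntegral.integral_congr_ae
    filter_upwards with t ht
    rw [Set.uIoc_of_le (by norm_num : (0:ℝ) ≤ 1), Set.mem_Ioc] at ht
    rw [h.2.2.2.1 t ht.1 ht.2, Complex.ofReal_one, one_div]
  have e2 : ∫ t in (-1:ℝ)..0, (φ t : ℂ) / (z - (t : ℂ)) =
      ∫ t in (-1:ℝ)..0, -(z - (t : ℂ))⁻¹ := by
    apply intervalIntegral.integral_congr_ae
    have h0 : ∀ᵐ t : ℝ, t ≠ (0:ℝ) := by
      rw [ae_iff]
      have : {t : ℝ | ¬ t ≠ (0:ℝ)} = {(0:ℝ)} := by ext t; simp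
      rw [this]
      exact measure_singleton 0
    filter_upwards [h0] with t ht0 ht
    rw [Set.uIoc_of_le (by norm_num : (-1:ℝ) ≤ 0), Set.mem_Ioc] at ht
    have hneg : t < 0 := lt_of_le_of_ne ht.2 ht0
    have hphit : φ t = -1 := by
      have hodd := h.2.1 (-t)
      rw [neg_neg] at hodd
      have h1 := h.2.2.2.1 (-t) (by linarith) (by linarith)
      rw [h1] at hodd
      linarith
    rw [hphit]
    push_cast
    rw [neg_div, one_div]
  rw [hset, ← hsplit, e1, e2, intervalIntegral.integral_neg, integral_inv hz, integral_inv hz]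
  push_cast
  ring

lemma tail_bound {φ : ℝ → ℝ} (h : IsPhi φ) {z : ℂ} (hz : 0 < z.im) (hz2 : ‖z‖ ≤ 1/2) :
    ‖∫ t in (Set.Ioc (-1:ℝ) 1)ᶜ, (φ t : ℂ) / (z - (t : ℂ))‖ ≤ 4 := by
  set f : ℝ → ℂ := fun t => (φ t : ℂ) / (z - (t : ℂ)) with hf
  set B : Set ℝ := Set.Ioc (-2:ℝ) (-1) ∪ Set.Ioc (1:ℝ) 2 with hB
  have hBsub : B ⊆ (Set.Ioc (-1:ℝ) 1)ᶜ := by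
    intro t ht
    simp only [hB, Set.mem_union, Set.mem_Ioc] at ht
    simp only [Set.mem_compl_iff, Set.mem_Ioc, not_and, not_le]
    rcases ht with ht | ht
    · intro hc; linarith [ht.2]
    · intro _; exact ht.1
  have hvanish : ∀ t ∈ (Set.Ioc (-1:ℝ) 1)ᶜ \ B, f t = 0 := by
    intro t ht
    obtain ⟨ht1, ht2⟩ := ht
    simp only [Set.mem_compl_iff, Set.mem_Ioc, not_and, not_le] at ht1
    simp only [hB, Set.mem_union, Set.mem_Ioc, not_or, not_and, not_le, not_lt] at ht2
    have habs : 2 ≤ |t| := by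
      rcases le_or_gt t (-1) with hc | hc
      · have := ht2.1
        rw [abs_of_nonpos (by linarith)]
        by_contra hcon
        push_neg at hcon
        linarith [this (by linarith) ]
      · have h1 : 1 < t := by
          by_contra hcon
          push_neg at hcon
          linarith [ht1 (by linarith)]
        rw [abs_of_pos (by linarith)]
        exact (ht2.2 h1).le
    simp [hf, phi_zero_far h t habs]
  have heq : ∫ t in (Set.Ioc (-1:ℝ) 1)ᶜ, f t = ∫ t in B, f t :=
    setIntegral_eq_of_subset_of_forall_diff_eq_zero measurableSet_Ioc.compl hBsub hvanish
  have hvol : volume B ≤ 2 := by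
    calc volume B ≤ volume (Set.Ioc (-2:ℝ) (-1)) + volume (Set.Ioc (1:ℝ) 2) :=
          measure_union_le _ _
      _ = 2 := by
          rw [Real.volume_Ioc, Real.volume_Ioc,
            (by norm_num : (-1 - (-2) : ℝ) = 1), (by norm_num : (2 - 1 : ℝ) = 1),
            ENNReal.ofReal_one]
          norm_num
  have hvolfin : volume B < ⊤ := lt_of_le_of_lt hvol (by norm_num)
  have hbound : ∀ t ∈ B, ‖f t‖ ≤ 2 := by
    intro t ht
    have habs : 1 ≤ |t| := by
      simp only [hB, Set.mem_union, Set.mem_Ioc] at ht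
      rcases ht with ht | ht
      · rw [abs_of_nonpos (by linarith [ht.2])]; linarith [ht.2]
      · rw [abs_of_pos (by linarith [ht.1])]; linarith [ht.1]
    have hd : (1:ℝ)/2 ≤ ‖z - (t : ℂ)‖ := by
      have h1 : ‖(t : ℂ)‖ - ‖z‖ ≤ ‖(t : ℂ) - z‖ := norm_sub_norm_le _ _
      rw [norm_sub_rev] at h1
      have h2 : ‖(t : ℂ)‖ = |t| := by rw [Complex.norm_real, Real.norm_eq_abs]
      rw [h2] at h1
      linarith
    have hn : ‖(φ t : ℂ)‖ ≤ 1 := by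
      rw [Complex.norm_real, Real.norm_eq_abs]
      exact phi_abs_le h t
    simp only [hf, norm_div]
    calc ‖(φ t : ℂ)‖ / ‖z - (t : ℂ)‖ ≤ 1 / (1/2) :=
          div_le_div₀ (by norm_num) hn (by norm_num) hd
      _ = 2 := by norm_num
  rw [heq]
  calc ‖∫ t in B, f t‖ ≤ 2 * (volume B).toReal :=
        norm_setIntegral_le_of_norm_le_const hvolfin hbound
    _ ≤ 2 * 2 := by
        have h2 : (volume B).toReal ≤ 2 := by
          have := ENNReal.toReal_mono (a := volume B) (b := (2 : ENNReal)) (by norm_num) hvol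
          simpa using this
        linarith
    _ = 4 := by norm_num

lemma main_bound {φ : ℝ → ℝ} (h : IsPhi φ) {z : ℂ} (hz : 0 < z.im) (hz1 : 0 < ‖z‖)
    (hz2 : ‖z‖ ≤ 1/2) :
    2 / Real.pi * Real.log (1/‖z‖) - 2 ≤ ‖UHG φ z‖ := by
  set f : ℝ → ℂ := fun t => (φ t : ℂ) / (z - (t : ℂ)) with hf
  set L : ℂ := 2 * Complex.log z - Complex.log (z - 1) - Complex.log (z + 1) with hL
  set R : ℂ := ∫ t in (Set.Ioc (-1:ℝ) 1)ᶜ, f t with hR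
  have hsplit : (∫ t, f t) = L + R := by
    rw [hL, ← mid_eq h hz, hR]
    exact (integral_add_compl measurableSet_Ioc (f_integrable h hz)).symm
  -- lower bound on ‖L‖
  have hz1' : ‖z - 1‖ ≥ 1/2 := by
    have h1 : ‖(1:ℂ)‖ - ‖z‖ ≤ ‖(1:ℂ) - z‖ := norm_sub_norm_le _ _
    rw [norm_sub_rev] at h1
    simp only [norm_one] at h1
    linarith
  have hz2' : ‖z + 1‖ ≥ 1/2 := by
    have h1 : ‖(1:ℂ)‖ - ‖-z‖ ≤ ‖(1:ℂ) - -z‖ := norm_sub_norm_le _ _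
    simp only [norm_one, norm_neg, sub_neg_eq_add] at h1
    rw [add_comm] at h1
    linarith
  have hlogre : L.re = 2 * Real.log ‖z‖ - Real.log ‖z - 1‖
      - Real.log ‖z + 1‖ := by
    simp [hL, Complex.log_re, Complex.sub_re, Complex.mul_re]
    try ring
  have habs_eq : ‖z‖ = ‖z‖ := rfl
  have hlog1 : Real.log (1/2) ≤ Real.log ‖z - 1‖ :=
    (Real.log_le_log_iff (by norm_num) (by
        linarith)).mpr (by linarith)
  have hlog2 : Real.log (1/2) ≤ Real.log ‖z + 1‖ := by
    exact (Real.log_le_log_iff (by norm_num) (by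
        linarith)).mpr (by linarith)
  have hLlow : 2 * Real.log (1/‖z‖) - 2 * Real.log 2 ≤ ‖L‖ := by
    have h1 : |L.re| ≤ ‖L‖ := Complex.abs_re_le_norm L
    have h2 : -‖L‖ ≤ L.re := by
      linarith [(abs_le.mp h1).1]
    have hlog0 : Real.log (1/‖z‖) = - Real.log ‖z‖ := by
      rw [one_div, Real.log_inv]
    have hhalf : Real.log (1/2) = - Real.log 2 := by
      rw [one_div, Real.log_inv]
    rw [hlog0]
    rw [hlogre, habs_eq] at h2
    rw [hhalf] at hlog1 hlog2
    linarith
  -- norm of the full integral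
  have hItot : ‖L‖ - 4 ≤ ‖∫ t, f t‖ := by
    have hRb : ‖R‖ ≤ 4 := tail_bound h hz hz2
    have : ‖L‖ ≤ ‖L + R‖ + ‖R‖ := by
      calc ‖L‖ = ‖L + R - R‖ := by ring_nf
        _ ≤ ‖L + R‖ + ‖R‖ := norm_sub_le _ _
    rw [hsplit]
    linarith
  -- norm of UHG
  have hUHG : ‖UHG φ z‖ = ‖∫ t, f t‖ / Real.pi := by
    rw [UHG, norm_smul]
    rw [norm_inv, norm_mul, Complex.norm_I, Complex.norm_real, Real.norm_eq_abs,
      abs_of_pos Real.pi_pos]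
    rw [mul_one, inv_mul_eq_div]
  have hkey : (2 * Real.log (1/‖z‖) - 2 * Real.log 2 - 4) / Real.pi ≤ ‖UHG φ z‖ := by
    rw [hUHG]
    exact (div_le_div_iff_of_pos_right Real.pi_pos).mpr (by linarith)
  have hfinal : 2 / Real.pi * Real.log (1/‖z‖) - 2 ≤
      (2 * Real.log (1/‖z‖) - 2 * Real.log 2 - 4) / Real.pi := by
    have hpi : (0:ℝ) < Real.pi := Real.pi_pos
    have hpi3 : 3 < Real.pi := Real.pi_gt_three
    have hl2 : Real.log 2 < 0.6931471808 := Real.log_two_lt_d9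
    have heq2 : (2 * Real.log (1/‖z‖) - 2 * Real.log 2 - 4) / Real.pi
        = 2 / Real.pi * Real.log (1/‖z‖) - (2 * Real.log 2 + 4) / Real.pi := by
      field_simp
      ring
    rw [heq2]
    have hc : (2 * Real.log 2 + 4) / Real.pi ≤ 2 := by
      rw [div_le_iff₀ hpi]
      nlinarith
    linarith
  linarith

end StmtAux


/-- The logarithmic lower estimate near `0`: `|(φ + iHφ)(z)| ≥ (2/π)log(1/|z|) - c₀`
for `z ∈ ℍ` with `0 < |z| ≤ 1/2`, and in particular `|(φ + iHφ)(z)| ≥ (1/π)log(1/|z|)`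
for `0 < |z| ≤ δ` for some fixed `δ ∈ (0, 1/2]`. -/
theorem stmt_11 : ∃ c₀ > (0:ℝ),
    (∀ φ : ℝ → ℝ, IsPhi φ → ∀ z : ℂ, 0 < z.im → 0 < ‖z‖ → ‖z‖ ≤ 1 / 2 →
      2 / Real.pi * Real.log (1 / ‖z‖) - c₀ ≤ ‖UHG φ z‖) ∧
    ∃ δ : ℝ, 0 < δ ∧ δ ≤ 1 / 2 ∧
      ∀ φ : ℝ → ℝ, IsPhi φ → ∀ z : ℂ, 0 < z.im → 0 < ‖z‖ → ‖z‖ ≤ δ →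
        1 / Real.pi * Real.log (1 / ‖z‖) ≤ ‖UHG φ z‖ := by
  have hδhalf : Real.exp (-(2 * Real.pi)) ≤ 1 / 2 := by
    have h1 : -(2 * Real.pi) ≤ Real.log (1 / 2) := by
      rw [one_div, Real.log_inv]
      have := Real.pi_gt_three
      have := Real.log_two_lt_d9
      linarith
    calc Real.exp (-(2 * Real.pi)) ≤ Real.exp (Real.log (1 / 2)) := Real.exp_le_exp.mpr h1
      _ = 1 / 2 := Real.exp_log (by norm_num)
  refine ⟨2, by norm_num, ?_, ?_⟩
  · intro φ hφ z hzim hz1 hz2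
    exact StmtAux.main_bound hφ hzim hz1 hz2
  · refine ⟨Real.exp (-(2 * Real.pi)), Real.exp_pos _, hδhalf, ?_⟩
    intro φ hφ z hzim hz1 hzδ
    have hmain := StmtAux.main_bound hφ hzim hz1 (le_trans hzδ hδhalf)
    have hL : 2 * Real.pi ≤ Real.log (1 / ‖z‖) := by
      rw [one_div, Real.log_inv]
      have h3 : Real.log ‖z‖ ≤ Real.log (Real.exp (-(2 * Real.pi))) :=
        (Real.log_le_log_iff hz1 (Real.exp_pos _)).mpr hzδ
      rw [Real.log_exp] at h3
      linarith
    have hpi := Real.pi_pos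
    have h2 : 2 ≤ Real.log (1 / ‖z‖) / Real.pi := by
      rw [le_div_iff₀ hpi]; linarith
    have he : 2 / Real.pi * Real.log (1 / ‖z‖) - 2 - 1 / Real.pi * Real.log (1 / ‖z‖)
        = Real.log (1 / ‖z‖) / Real.pi - 2 := by
      field_simp
      ring
    linarith
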